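/- Let α > 0 and let F : ℝ → ℝ be continuously differentiable on [0,∞) with F(t) > 0 for all t ≥ 0. Assume that the derivative t ↦ F'(t) is nondecreasing on [0,∞) and that t^α · F(t) → 1 as t → ∞. Then t^{α+1} · (−F'(t)) → α as t → ∞. -/

import Mathlib

open Filter Set

/-- Difference-quotient limit for `x ↦ (c + d*x)^(-α)` style functions: derivative of
`fun x => -((1 + x) ^ (-α))` at `0` is `α`. -/
lemma aux_hasDerivAt_plus (α : ℝ) :
    HasDerivAt (fun x : ℝ => -((1 + x) ^ (-α) : ℝ)) α 0 := by
  have h1 : HasDerivAt (fun x : ℝ => 1 + x) 1 0 := by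
    simpa using (hasDerivAt_id (0:ℝ)).const_add 1
  have h2 : HasDerivAt (fun y : ℝ => y ^ (-α)) (-α * (1:ℝ) ^ (-α - 1)) ((1:ℝ) + 0) := by
    rw [add_zero]
    exact Real.hasDerivAt_rpow_const (Or.inl one_ne_zero)
  have h3 := (h2.comp 0 h1).neg
  exact h3.congr_deriv (by rw [Real.one_rpow]; ring)

lemma aux_hasDerivAt_minus (α : ℝ) :
    HasDerivAt (fun x : ℝ => ((1 - x) ^ (-α) : ℝ)) α 0 := by
  have h1 : HasDerivAt (fun x : ℝ => 1 - x) (-1) 0 := by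
    simpa using (hasDerivAt_id (0:ℝ)).const_sub 1
  have h2 : HasDerivAt (fun y : ℝ => y ^ (-α)) (-α * (1:ℝ) ^ (-α - 1)) ((1:ℝ) - 0) := by
    rw [sub_zero]
    exact Real.hasDerivAt_rpow_const (Or.inl one_ne_zero)
  have h3 := h2.comp 0 h1
  exact h3.congr_deriv (by rw [Real.one_rpow]; ring)

lemma aux_slope_plus (α : ℝ) :
    Tendsto (fun ε : ℝ => (1 - (1 + ε) ^ (-α)) / ε) (nhdsWithin 0 (Ioi 0)) (nhds α) := by
  have h := (hasDerivAt_iff_tendsto_slope.mp (aux_hasDerivAt_plus α)).mono_left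
    (nhdsWithin_mono 0 (fun x hx => ne_of_gt hx))
  refine h.congr fun ε => ?_
  rw [slope_def_field]
  simp [neg_div]
  ring_nf

lemma aux_slope_minus (α : ℝ) :
    Tendsto (fun ε : ℝ => ((1 - ε) ^ (-α) - 1) / ε) (nhdsWithin 0 (Ioi 0)) (nhds α) := by
  have h := (hasDerivAt_iff_tendsto_slope.mp (aux_hasDerivAt_minus α)).mono_left
    (nhdsWithin_mono 0 (fun x hx => ne_of_gt hx))
  refine h.congr fun ε => ?_
  rw [slope_def_field]
  simp

/-- Lemma 3.5 (Asymptotic derivative): if `F` is continuously differentiable on `[0,∞)`,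
positive, with nondecreasing derivative, and `t^α * F t → 1`, then
`t^(α+1) * (-F' t) → α`. -/
theorem asymptotic_derivative (α : ℝ) (hα : 0 < α) (F F' : ℝ → ℝ)
    (hderiv : ∀ t ∈ Ici (0:ℝ), HasDerivWithinAt F (F' t) (Ici 0) t)
    (hcont : ContinuousOn F' (Ici 0))
    (hpos : ∀ t ∈ Ici (0:ℝ), 0 < F t)
    (hmono : ∀ s ∈ Ici (0:ℝ), ∀ t ∈ Ici (0:ℝ), s ≤ t → F' s ≤ F' t)
    (hlim : Tendsto (fun t : ℝ => t ^ α * F t) atTop (nhds 1)) :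
    Tendsto (fun t : ℝ => t ^ (α + 1) * (-F' t)) atTop (nhds α) := by
  have hFc : ContinuousOn F (Ici 0) := fun t ht => (hderiv t ht).continuousWithinAt
  have hdA : ∀ t : ℝ, 0 < t → HasDerivAt F (F' t) t := fun t ht =>
    (hderiv t ht.le).hasDerivAt (Ici_mem_nhds ht)
  -- mean value bounds from monotone derivative
  have mvt : ∀ x y : ℝ, 0 < x → x ≤ y →
      F' x * (y - x) ≤ F y - F x ∧ F y - F x ≤ F' y * (y - x) := by
    intro x y hx hxy
    have hIcc : Icc x y ⊆ Ici (0:ℝ) := fun z hz => le_trans hx.le hz.1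
    have hc : ContinuousOn F (Icc x y) := hFc.mono hIcc
    have hdiff : DifferentiableOn ℝ F (interior (Icc x y)) := by
      rw [interior_Icc]
      intro z hz
      exact ((hdA z (hx.trans hz.1)).differentiableAt).differentiableWithinAt
    constructor
    · refine (convex_Icc x y).mul_sub_le_image_sub_of_le_deriv hc hdiff ?_ x
        (left_mem_Icc.2 hxy) y (right_mem_Icc.2 hxy) hxy
      rw [interior_Icc]
      intro z hz
      have hz0 : 0 < z := hx.trans hz.1
      rw [(hdA z hz0).deriv]
      exact hmono x hx.le z hz0.le hz.1.le
    · refine (convex_Icc x y).image_sub_le_mul_sub_of_deriv_le hc hdiff ?_ x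
        (left_mem_Icc.2 hxy) y (right_mem_Icc.2 hxy) hxy
      rw [interior_Icc]
      intro z hz
      have hz0 : 0 < z := hx.trans hz.1
      rw [(hdA z hz0).deriv]
      exact hmono z hz0.le y (hx.le.trans hxy) hz.2.le
  rw [tendsto_order]
  constructor
  · -- lower bound
    intro a ha
    obtain ⟨ε, hε0, haM⟩ : ∃ ε : ℝ, 0 < ε ∧ a < (1 - (1 + ε) ^ (-α)) / ε := by
      have h := ((aux_slope_plus α).eventually (eventually_gt_nhds ha)).and
        self_mem_nhdsWithin
      obtain ⟨ε, h1, h2⟩ := h.exists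
      exact ⟨ε, h2, h1⟩
    set c : ℝ := 1 + ε with hc
    have hc0 : (0:ℝ) < c := by positivity
    have hcomp : Tendsto (fun t : ℝ => (c * t) ^ α * F (c * t)) atTop (nhds 1) :=
      hlim.comp (tendsto_id.const_mul_atTop hc0)
    have hpow : c ^ (-α) * c ^ α = 1 := by
      rw [← Real.rpow_add hc0]; simp
    have heq : ∀ᶠ t : ℝ in atTop,
        c ^ (-α) * ((c * t) ^ α * F (c * t)) = t ^ α * F (c * t) := by
      filter_upwards [eventually_ge_atTop (0:ℝ)] with t ht
      rw [Real.mul_rpow hc0.le ht]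
      calc c ^ (-α) * (c ^ α * t ^ α * F (c * t))
          = (c ^ (-α) * c ^ α) * (t ^ α * F (c * t)) := by ring
        _ = t ^ α * F (c * t) := by rw [hpow, one_mul]
    have hF2 : Tendsto (fun t : ℝ => t ^ α * F (c * t)) atTop (nhds (c ^ (-α) * 1)) :=
      (hcomp.const_mul _).congr' heq
    have hU : Tendsto (fun t : ℝ => (t ^ α * F t - t ^ α * F (c * t)) / ε) atTop
        (nhds ((1 - c ^ (-α)) / ε)) := by
      have h := (hlim.sub hF2).div_const ε
      simpa using h
    have hev : ∀ᶠ t : ℝ in atTop,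
        (t ^ α * F t - t ^ α * F (c * t)) / ε ≤ t ^ (α + 1) * (-F' t) := by
      filter_upwards [eventually_gt_atTop (0:ℝ)] with t ht
      have hb := (mvt t (c * t) ht (by nlinarith)).1
      have hrw : c * t - t = ε * t := by rw [hc]; ring
      rw [hrw] at hb
      have htα : 0 < t ^ α := Real.rpow_pos_of_pos ht _
      have htp : t ^ (α + 1) = t ^ α * t := Real.rpow_add_one ht.ne' α
      rw [div_le_iff₀ hε0, htp]
      nlinarith [mul_le_mul_of_nonneg_left hb htα.le]
    filter_upwards [hev, hU.eventually (eventually_gt_nhds haM)] with t h1 h2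
    exact lt_of_lt_of_le h2 h1
  · -- upper bound
    intro b hb
    obtain ⟨ε, hε0, hε1, hbM⟩ : ∃ ε : ℝ, 0 < ε ∧ ε < 1 ∧ ((1 - ε) ^ (-α) - 1) / ε < b := by
      have hIoo : ∀ᶠ ε : ℝ in nhdsWithin 0 (Ioi 0), ε ∈ Ioo (0:ℝ) 1 :=
        Ioo_mem_nhdsGT_of_mem ⟨le_refl 0, one_pos⟩
      have h := ((aux_slope_minus α).eventually (eventually_lt_nhds hb)).and hIoo
      obtain ⟨ε, h1, h2⟩ := h.exists
      exact ⟨ε, h2.1, h2.2, h1⟩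
    set c : ℝ := 1 - ε with hc
    have hc0 : (0:ℝ) < c := by simp [hc]; linarith
    have hcomp : Tendsto (fun t : ℝ => (c * t) ^ α * F (c * t)) atTop (nhds 1) :=
      hlim.comp (tendsto_id.const_mul_atTop hc0)
    have hpow : c ^ (-α) * c ^ α = 1 := by
      rw [← Real.rpow_add hc0]; simp
    have heq : ∀ᶠ t : ℝ in atTop,
        c ^ (-α) * ((c * t) ^ α * F (c * t)) = t ^ α * F (c * t) := by
      filter_upwards [eventually_ge_atTop (0:ℝ)] with t ht
      rw [Real.mul_rpow hc0.le ht]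
      calc c ^ (-α) * (c ^ α * t ^ α * F (c * t))
          = (c ^ (-α) * c ^ α) * (t ^ α * F (c * t)) := by ring
        _ = t ^ α * F (c * t) := by rw [hpow, one_mul]
    have hF2 : Tendsto (fun t : ℝ => t ^ α * F (c * t)) atTop (nhds (c ^ (-α) * 1)) :=
      (hcomp.const_mul _).congr' heq
    have hU : Tendsto (fun t : ℝ => (t ^ α * F (c * t) - t ^ α * F t) / ε) atTop
        (nhds ((c ^ (-α) - 1) / ε)) := by
      have h := (hF2.sub hlim).div_const ε
      simpa using h
    have hev : ∀ᶠ t : ℝ in atTop,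
        t ^ (α + 1) * (-F' t) ≤ (t ^ α * F (c * t) - t ^ α * F t) / ε := by
      filter_upwards [eventually_gt_atTop (0:ℝ)] with t ht
      have hct : 0 < c * t := mul_pos hc0 ht
      have hb' := (mvt (c * t) t hct (by nlinarith)).2
      have hrw : t - c * t = ε * t := by rw [hc]; ring
      rw [hrw] at hb'
      have htα : 0 < t ^ α := Real.rpow_pos_of_pos ht _
      have htp : t ^ (α + 1) = t ^ α * t := Real.rpow_add_one ht.ne' α
      rw [le_div_iff₀ hε0, htp]
      nlinarith [mul_le_mul_of_nonneg_left hb' htα.le]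
    filter_upwards [hev, hU.eventually (eventually_lt_nhds hbM)] with t h1 h2
    exact lt_of_le_of_lt h1 h2
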